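/- Suppose Assumption (A) holds. Then there exists a constant r ∈ [0,1) such that b·(g(z) − 1)/g(z) ≥ −r·D* for all z ≥ 0; equivalently, b·(1 − μ(S*)/μ(S)) ≥ −r·D* for all S ∈ [S*, S_in]. -/

import Mathlib

/-- Under Assumption (A) there exists r ∈ [0,1) such that
b·(g(z)−1)/g(z) ≥ −r·D* for all z ≥ 0; equivalently
b·(1 − μ(S*)/μ(S)) ≥ −r·D* for all S ∈ [S*,S_in]. -/
theorem stmt_7
    (S_in Sstar p0 b Dstar : ℝ) (μ : ℝ → ℝ)
    (hSin : 0 < S_in) (hSstar : Sstar ∈ Set.Ioo 0 S_in)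
    (hp0 : 0 < p0) (hb : 0 ≤ b) (hDstar : 0 < Dstar)
    (hμ_bdd : BddAbove (Set.range μ))
    (hμ_C1 : ContDiffOn ℝ 1 μ (Set.Ici 0))
    (hμ_nonneg : ∀ S, 0 ≤ S → 0 ≤ μ S)
    (hμ_zero : μ 0 = 0) (hμ_pos : ∀ S, 0 < S → 0 < μ S)
    (heq : p0 * μ Sstar = b + Dstar)
    (κ : ℝ) (hκ : κ = (S_in - Sstar) / Sstar)
    (p g : ℝ → ℝ)
    (hp : ∀ z, p z = κ * Real.exp (-z) + 1)
    (hg : ∀ z, g z = μ (S_in / p z) / μ Sstar)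
    -- Assumption (A)
    (hA : ∀ S ∈ Set.Icc Sstar S_in, b < p0 * μ S) :
    ∃ r ∈ Set.Ico (0 : ℝ) 1,
      (∀ z : ℝ, 0 ≤ z → -(r * Dstar) ≤ b * (g z - 1) / g z) ∧
      (∀ S ∈ Set.Icc Sstar S_in, -(r * Dstar) ≤ b * (1 - μ Sstar / μ S)) := by
  obtain ⟨hS0, hSS⟩ := hSstar
  have hcont : ContinuousOn μ (Set.Icc Sstar S_in) :=
    hμ_C1.continuousOn.mono (fun x hx => le_trans hS0.le hx.1)
  have hne : (Set.Icc Sstar S_in).Nonempty := ⟨Sstar, le_refl _, hSS.le⟩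
  obtain ⟨Sc, hSc, hmin⟩ := isCompact_Icc.exists_isMinOn hne hcont
  set c := μ Sc with hc
  have hcpos : 0 < c := hμ_pos Sc (lt_of_lt_of_le hS0 hSc.1)
  have hμSstar : 0 < μ Sstar := hμ_pos Sstar hS0
  have hkey : b * μ Sstar / c - b < Dstar := by
    have h1 : b * μ Sstar < (b + Dstar) * c := by
      have hA' := hA Sc hSc
      nlinarith
    have h2 : b * μ Sstar / c < b + Dstar := by
      rw [div_lt_iff₀ hcpos]; nlinarith
    linarith
  have hrD : max 0 (b * μ Sstar / c - b) / Dstar * Dstar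
      = max 0 (b * μ Sstar / c - b) := by field_simp
  have hSver : ∀ S ∈ Set.Icc Sstar S_in,
      -(max 0 (b * μ Sstar / c - b) / Dstar * Dstar) ≤ b * (1 - μ Sstar / μ S) := by
    intro S hS
    have hμS : 0 < μ S := hμ_pos S (lt_of_lt_of_le hS0 hS.1)
    have hcS : c ≤ μ S := hmin hS
    rw [hrD]
    have h2 : b * μ Sstar / μ S ≤ b * μ Sstar / c :=
      div_le_div_of_nonneg_left (by positivity) hcpos hcS
    have h3 : b * (1 - μ Sstar / μ S) = b - b * μ Sstar / μ S := by
      field_simp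
    have h4 : -(max 0 (b * μ Sstar / c - b)) ≤ -(b * μ Sstar / c - b) :=
      neg_le_neg (le_max_right _ _)
    linarith
  refine ⟨max 0 (b * μ Sstar / c - b) / Dstar, ⟨by positivity, ?_⟩, ?_, hSver⟩
  · rw [div_lt_one hDstar]
    exact max_lt hDstar hkey
  · intro z hz
    have hκpos : 0 < κ := by
      rw [hκ]; apply div_pos (by linarith) hS0
    have hexp0 : 0 < Real.exp (-z) := Real.exp_pos _
    have hexp1 : Real.exp (-z) ≤ 1 := Real.exp_le_one_iff.mpr (by linarith)
    have h1 : 1 < p z := by rw [hp z]; nlinarith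
    have hκ1 : κ + 1 = S_in / Sstar := by
      rw [hκ]; field_simp; ring
    have h2 : p z ≤ S_in / Sstar := by
      rw [hp z, ← hκ1]; nlinarith
    have hmem : S_in / p z ∈ Set.Icc Sstar S_in := by
      constructor
      · rw [le_div_iff₀ (by linarith : (0:ℝ) < p z)]
        calc Sstar * p z ≤ Sstar * (S_in / Sstar) := by nlinarith
          _ = S_in := by field_simp
      · exact div_le_self hSin.le h1.le
    have hμS : 0 < μ (S_in / p z) := hμ_pos _ (lt_of_lt_of_le hS0 hmem.1)
    have hgz : b * (g z - 1) / g z = b * (1 - μ Sstar / μ (S_in / p z)) := by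
      rw [hg z]
      field_simp
    rw [hgz]
    exact hSver _ hmem
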